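/- The POVMs A_1 = {(1/2)(I−|i⟩⟨i|)}_{i=1,2,3} and A_2 = {(1/2)|φ⟩⟨φ|, I − (1/2)|φ⟩⟨φ|} on ℂ³, with |φ⟩ = (1/√3)(|1⟩+|2⟩+|3⟩), are not jointly measurable. -/

import Mathlib

open Matrix ComplexOrder

/-- The computational basis vector `|i⟩` of ℂ³. -/
def e (i : Fin 3) : Fin 3 → ℂ := fun j => if j = i then 1 else 0

/-- The vector `|φ⟩ = (1/√3)(|1⟩ + |2⟩ + |3⟩)`. -/
noncomputable def φ : Fin 3 → ℂ := fun _ => 1 / (Real.sqrt 3 : ℂ)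

/-- Rank-one projector `|v⟩⟨v|` as a matrix. -/
noncomputable def proj (v : Fin 3 → ℂ) : Matrix (Fin 3) (Fin 3) ℂ :=
  Matrix.vecMulVec v (star v)

/-- The POVM `A₁(i) = (1/2)(I − |i⟩⟨i|)`. -/
noncomputable def A1 (i : Fin 3) : Matrix (Fin 3) (Fin 3) ℂ :=
  (1 / 2 : ℂ) • ((1 : Matrix (Fin 3) (Fin 3) ℂ) - proj (e i))

/-- The POVM `A₂ = {(1/2)|φ⟩⟨φ|, I − (1/2)|φ⟩⟨φ|}`. -/
noncomputable def A2 : Fin 2 → Matrix (Fin 3) (Fin 3) ℂ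
  | 0 => (1 / 2 : ℂ) • proj φ
  | 1 => 1 - (1 / 2 : ℂ) • proj φ

lemma vecMulVec_mulVec' (v w x : Fin 3 → ℂ) :
    Matrix.vecMulVec v w *ᵥ x = (w ⬝ᵥ x) • v := by
  funext i
  simp [Matrix.mulVec, Matrix.vecMulVec_apply, dotProduct, Finset.mul_sum,
    mul_comm, mul_assoc, mul_left_comm]

/-- If `A = ∑ c l • G l` with `c l ≥ 0` and `G l` PSD, and `A *ᵥ x = 0`,
then `G l *ᵥ x = 0` whenever `c l > 0`. -/
lemma key {m : ℕ} (G : Fin m → Matrix (Fin 3) (Fin 3) ℂ) (hG : ∀ l, (G l).PosSemidef)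
    (c : Fin m → ℝ) (hc : ∀ l, 0 ≤ c l) (A : Matrix (Fin 3) (Fin 3) ℂ)
    (hA : A = ∑ l, ((c l : ℝ) : ℂ) • G l) (x : Fin 3 → ℂ) (hx : A *ᵥ x = 0)
    (l : Fin m) (hl : 0 < c l) : G l *ᵥ x = 0 := by
  have hsum : ∑ l, ((c l : ℝ) : ℂ) * (star x ⬝ᵥ G l *ᵥ x) = 0 := by
    have : star x ⬝ᵥ A *ᵥ x = 0 := by rw [hx, dotProduct_zero]
    rw [hA] at this
    have hlin : (∑ l, ((c l : ℝ) : ℂ) • G l) *ᵥ x = ∑ l, (((c l : ℝ) : ℂ) • G l) *ᵥ x :=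
      map_sum (Matrix.mulVec.addMonoidHomLeft x) _ _
    rw [← this, hlin]
    simp only [Matrix.smul_mulVec, dotProduct, Finset.sum_apply, Pi.smul_apply,
      smul_eq_mul, Finset.mul_sum, mul_left_comm]
    exact Finset.sum_comm
  have hnn : ∀ l ∈ Finset.univ, (0 : ℂ) ≤ ((c l : ℝ) : ℂ) * (star x ⬝ᵥ G l *ᵥ x) :=
    fun l _ => mul_nonneg (by exact_mod_cast hc l) ((hG l).dotProduct_mulVec_nonneg x)
  have hterm : ((c l : ℝ) : ℂ) * (star x ⬝ᵥ G l *ᵥ x) = 0 :=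
    (Finset.sum_eq_zero_iff_of_nonneg hnn).mp hsum l (Finset.mem_univ l)
  have hcl : ((c l : ℝ) : ℂ) ≠ 0 := by exact_mod_cast hl.ne'
  have hq : star x ⬝ᵥ G l *ᵥ x = 0 := by
    rcases mul_eq_zero.mp hterm with h | h
    · exact absurd h hcl
    · exact h
  exact ((hG l).dotProduct_mulVec_zero_iff x).mp hq

theorem stmt_15 :
    ¬ ∃ (m : ℕ) (G : Fin m → Matrix (Fin 3) (Fin 3) ℂ)
        (D1 : Fin m → Fin 3 → ℝ) (D2 : Fin m → Fin 2 → ℝ),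
      (∀ lam, (G lam).PosSemidef) ∧ (∑ lam, G lam = 1) ∧
      (∀ lam i, 0 ≤ D1 lam i) ∧ (∀ lam, ∑ i, D1 lam i = 1) ∧
      (∀ lam j, 0 ≤ D2 lam j) ∧ (∀ lam, ∑ j, D2 lam j = 1) ∧
      (∀ i, A1 i = ∑ lam, ((D1 lam i : ℝ) : ℂ) • G lam) ∧
      (∀ j, A2 j = ∑ lam, ((D2 lam j : ℝ) : ℂ) • G lam) := by
  rintro ⟨m, G, D1, D2, hGpsd, hGsum, hD1pos, hD1sum, hD2pos, hD2sum, hA1eq, hA2eq⟩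
  -- A1 i kills e i
  have hA1mul : ∀ i, A1 i *ᵥ e i = 0 := by
    intro i
    have h1 : proj (e i) *ᵥ e i = e i := by
      rw [proj, vecMulVec_mulVec']
      have : star (e i) ⬝ᵥ e i = 1 := by
        fin_cases i <;> simp [e, dotProduct, Fin.sum_univ_three]
      rw [this, one_smul]
    rw [A1, Matrix.smul_mulVec, Matrix.sub_mulVec, Matrix.one_mulVec, h1,
      sub_self, smul_zero]
  -- A2 0 kills vectors orthogonal to φ
  have hφd : ∀ x : Fin 3 → ℂ, star φ ⬝ᵥ x = 0 → A2 0 *ᵥ x = 0 := by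
    intro x hx
    show ((1 / 2 : ℂ) • proj φ) *ᵥ x = 0
    rw [Matrix.smul_mulVec, proj, vecMulVec_mulVec', hx, zero_smul, smul_zero]
  -- Step A: D1 lam i > 0 → G lam *ᵥ e i = 0
  have stepA : ∀ lam i, 0 < D1 lam i → G lam *ᵥ e i = 0 := fun lam i h =>
    key G hGpsd (fun l => D1 l i) (fun l => hD1pos l i) (A1 i) (hA1eq i) (e i)
      (hA1mul i) lam h
  -- Step B: D2 lam 0 > 0 → G lam kills e a - e b for all a b
  have stepB : ∀ lam, 0 < D2 lam 0 → ∀ a b : Fin 3, G lam *ᵥ (e a - e b) = 0 := by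
    intro lam h a b
    have hx : star φ ⬝ᵥ (e a - e b) = 0 := by
      fin_cases a <;> fin_cases b <;>
        simp [φ, e, dotProduct, Fin.sum_univ_three, sub_self]
    have hA2x : A2 0 *ᵥ (e a - e b) = 0 := hφd _ hx
    exact key G hGpsd (fun l => D2 l 0) (fun l => hD2pos l 0) (A2 0) (hA2eq 0)
      (e a - e b) hA2x lam h
  -- Step C: D2 lam 0 > 0 → G lam = 0
  have stepC : ∀ lam, 0 < D2 lam 0 → G lam = 0 := by
    intro lam h
    -- find i with D1 lam i > 0
    obtain ⟨i, hi⟩ : ∃ i, 0 < D1 lam i := by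
      by_contra hcon
      push_neg at hcon
      have : ∀ i, D1 lam i = 0 := fun i => le_antisymm (hcon i) (hD1pos lam i)
      have hs := hD1sum lam
      rw [Fin.sum_univ_three, this 0, this 1, this 2] at hs
      norm_num at hs
    have hei : G lam *ᵥ e i = 0 := stepA lam i hi
    -- all columns equal
    have hcols : ∀ a b : Fin 3, G lam *ᵥ e a = G lam *ᵥ e b := by
      intro a b
      have hab := stepB lam h a b
      rw [Matrix.mulVec_sub] at hab
      exact sub_eq_zero.mp hab
    have hall : ∀ a : Fin 3, G lam *ᵥ e a = 0 := fun a => (hcols a i).trans hei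
    ext k j
    have hj := congrFun (hall j) k
    simpa [Matrix.mulVec, dotProduct, e, Fin.sum_univ_three] using hj
  -- Conclusion: A2 0 = 0, contradiction
  have hA20 : A2 0 = 0 := by
    rw [hA2eq 0]
    refine Finset.sum_eq_zero fun lam _ => ?_
    rcases lt_or_eq_of_le (hD2pos lam 0) with h | h
    · rw [stepC lam h, smul_zero]
    · rw [← h]; simp
  have hentry := congrFun (congrFun hA20 0) 0
  have hs3 : (Real.sqrt 3 : ℂ) ≠ 0 := by
    exact_mod_cast (Real.sqrt_pos.mpr (by norm_num)).ne'
  simp only [A2, Matrix.smul_apply, proj, Matrix.vecMulVec_apply, φ,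
    Pi.star_apply, Matrix.zero_apply, smul_eq_mul] at hentry
  rw [mul_eq_zero, mul_eq_zero] at hentry
  rcases hentry with h | h | h
  · norm_num at h
  · exact (div_ne_zero one_ne_zero hs3) h
  · rw [star_div₀, star_one] at h
    exact (div_ne_zero one_ne_zero (by simp)) h
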